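/- Let C ≤ (Fin 20 → ZMod 2) be the row space of the nine binary vectors (qubits grouped into five blocks of four): r₁ = 1111 0000 0000 0000 0000, r₂ = 0000 1111 0000 0000 0000, r₃ = 0000 0000 1111 0000 0000, r₄ = 0000 0000 0000 1111 0000, r₅ = 0000 0000 0000 0000 1111, r₆ = 1100 1010 1010 1100 0000, r₇ = 1010 0110 0110 1010 0000, r₈ = 0000 1100 1010 1010 1100, r₉ = 0000 1010 0110 0110 1010. Then C is self-orthogonal (C ⊆ C^⊥ under the standard dot product), the F₂-dimension of C equals 9, and the minimum Hamming weight over the set C^⊥ \ C equals 6. (That is, the self-dual CSS code with both X- and Z-checks given by C is a [[20,2,6]] code, obtained by concatenating the [[5,1,3]] code with the [[4,2,2]] code.) -/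
import Mathlib

/-- The standard dot product on binary vectors. -/
def dotV {n : ℕ} (u v : Fin n → ZMod 2) : ZMod 2 := ∑ j, u j * v j

/-- The Hamming weight of a binary vector. -/
def hw {n : ℕ} (v : Fin n → ZMod 2) : ℕ := (Finset.univ.filter fun j => v j ≠ 0).card

def r1 : Fin 20 → ZMod 2 := ![1,1,1,1, 0,0,0,0, 0,0,0,0, 0,0,0,0, 0,0,0,0]
def r2 : Fin 20 → ZMod 2 := ![0,0,0,0, 1,1,1,1, 0,0,0,0, 0,0,0,0, 0,0,0,0]
def r3 : Fin 20 → ZMod 2 := ![0,0,0,0, 0,0,0,0, 1,1,1,1, 0,0,0,0, 0,0,0,0]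
def r4 : Fin 20 → ZMod 2 := ![0,0,0,0, 0,0,0,0, 0,0,0,0, 1,1,1,1, 0,0,0,0]
def r5 : Fin 20 → ZMod 2 := ![0,0,0,0, 0,0,0,0, 0,0,0,0, 0,0,0,0, 1,1,1,1]
def r6 : Fin 20 → ZMod 2 := ![1,1,0,0, 1,0,1,0, 1,0,1,0, 1,1,0,0, 0,0,0,0]
def r7 : Fin 20 → ZMod 2 := ![1,0,1,0, 0,1,1,0, 0,1,1,0, 1,0,1,0, 0,0,0,0]
def r8 : Fin 20 → ZMod 2 := ![0,0,0,0, 1,1,0,0, 1,0,1,0, 1,0,1,0, 1,1,0,0]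
def r9 : Fin 20 → ZMod 2 := ![0,0,0,0, 1,0,1,0, 0,1,1,0, 0,1,1,0, 1,0,1,0]

/-- The check matrix row space of the `[[20,2,6]]` self-dual CSS code. -/
def C2026 : Submodule (ZMod 2) (Fin 20 → ZMod 2) :=
  Submodule.span (ZMod 2) {r1, r2, r3, r4, r5, r6, r7, r8, r9}

/-! ### Auxiliary definitions -/

def rv : Fin 9 → (Fin 20 → ZMod 2) := ![r1, r2, r3, r4, r5, r6, r7, r8, r9]

def dv : Fin 11 → (Fin 20 → ZMod 2) :=
![![1,0,0,1,0,0,0,0,0,1,1,0,0,0,1,1,0,0,1,1],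
  ![0,1,0,1,0,0,0,0,0,1,0,1,0,1,1,0,0,1,1,0],
  ![0,0,1,1,0,0,0,0,0,0,1,1,0,1,0,1,0,1,0,1],
  ![0,0,0,0,1,0,0,1,0,0,1,1,0,0,1,1,0,1,1,0],
  ![0,0,0,0,0,1,0,1,0,1,1,0,0,1,1,0,0,1,0,1],
  ![0,0,0,0,0,0,1,1,0,1,0,1,0,1,0,1,0,0,1,1],
  ![0,0,0,0,0,0,0,0,1,1,1,1,0,0,0,0,0,0,0,0],
  ![0,0,0,0,0,0,0,0,0,0,0,0,1,1,1,1,0,0,0,0],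
  ![0,0,0,0,0,0,0,0,0,0,0,0,0,0,0,0,1,1,1,1],
  ![1,1,0,0,0,1,1,0,1,1,0,0,0,0,0,0,0,0,0,0],
  ![1,0,1,0,1,1,0,0,1,0,1,0,0,0,0,0,0,0,0,0]]

def yv : Fin 11 → (Fin 20 → ZMod 2) :=
![![1,1,1,0,1,0,1,0,0,1,1,0,0,0,0,0,0,0,0,0],
  ![1,1,1,0,1,1,0,0,1,0,1,0,0,0,0,0,0,0,0,0],
  ![1,1,1,0,0,1,1,0,1,1,0,0,0,0,0,0,0,0,0,0],
  ![1,1,0,0,1,1,1,0,1,1,0,0,0,0,0,0,0,0,0,0],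
  ![0,1,1,0,1,1,1,0,0,1,1,0,0,0,0,0,0,0,0,0],
  ![1,0,1,0,1,1,1,0,1,0,1,0,0,0,0,0,0,0,0,0],
  ![0,1,1,0,1,0,1,0,1,1,1,0,0,0,0,0,0,0,0,0],
  ![0,0,0,0,0,0,0,0,0,0,0,0,1,0,0,0,0,0,0,0],
  ![0,0,0,0,0,0,0,0,0,0,0,0,0,0,0,0,1,0,0,0],
  ![1,0,1,0,1,1,0,0,1,0,1,0,0,0,0,0,0,0,0,0],
  ![1,1,0,0,0,1,1,0,1,1,0,0,0,0,0,0,0,0,0,0]]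

def wv : Fin 9 → (Fin 20 → ZMod 2) :=
![![1,1,1,0,0,0,0,0,0,0,0,0,0,0,0,0,0,0,0,0],
  ![0,0,0,0,1,1,1,0,0,0,0,0,0,0,0,0,0,0,0,0],
  ![0,1,1,0,1,0,1,0,1,0,0,0,0,0,0,0,0,0,0,0],
  ![1,0,1,0,1,0,1,0,0,0,0,0,1,0,0,0,0,0,0,0],
  ![1,0,1,0,0,1,1,0,0,0,0,0,0,0,0,0,1,0,0,0],
  ![1,0,1,0,0,0,0,0,0,0,0,0,0,0,0,0,0,0,0,0],
  ![1,1,0,0,0,0,0,0,0,0,0,0,0,0,0,0,0,0,0,0],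
  ![1,1,0,0,1,0,1,0,0,0,0,0,0,0,0,0,0,0,0,0],
  ![0,1,1,0,1,1,0,0,0,0,0,0,0,0,0,0,0,0,0,0]]

lemma dotV_comm {n : ℕ} (u v : Fin n → ZMod 2) : dotV u v = dotV v u := by
  simp [dotV, mul_comm]

/-- `dotV u ·` as a linear map. -/
def dotL {n : ℕ} (u : Fin n → ZMod 2) : (Fin n → ZMod 2) →ₗ[ZMod 2] ZMod 2 where
  toFun v := dotV u v
  map_add' x y := by simp [dotV, mul_add, Finset.sum_add_distrib]
  map_smul' c x := by simp [dotV, Finset.mul_sum, mul_left_comm]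

@[simp] lemma dotL_apply {n : ℕ} (u v : Fin n → ZMod 2) : dotL u v = dotV u v := rfl

lemma hC_eq : C2026 = Submodule.span (ZMod 2) (Set.range rv) := by
  rw [C2026]
  congr 1
  ext x
  simp only [Set.mem_insert_iff, Set.mem_singleton_iff, Set.mem_range]
  constructor
  · rintro (rfl|rfl|rfl|rfl|rfl|rfl|rfl|rfl|rfl)
    exacts [⟨0,rfl⟩,⟨1,rfl⟩,⟨2,rfl⟩,⟨3,rfl⟩,⟨4,rfl⟩,⟨5,rfl⟩,⟨6,rfl⟩,⟨7,rfl⟩,⟨8,rfl⟩]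
  · rintro ⟨i, rfl⟩
    fin_cases i
    exacts [Or.inl rfl, Or.inr (Or.inl rfl), Or.inr (Or.inr (Or.inl rfl)),
      Or.inr (Or.inr (Or.inr (Or.inl rfl))), Or.inr (Or.inr (Or.inr (Or.inr (Or.inl rfl)))),
      Or.inr (Or.inr (Or.inr (Or.inr (Or.inr (Or.inl rfl))))),
      Or.inr (Or.inr (Or.inr (Or.inr (Or.inr (Or.inr (Or.inl rfl)))))),
      Or.inr (Or.inr (Or.inr (Or.inr (Or.inr (Or.inr (Or.inr (Or.inl rfl))))))),
      Or.inr (Or.inr (Or.inr (Or.inr (Or.inr (Or.inr (Or.inr (Or.inr rfl)))))))]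

lemma rv_mem (i : Fin 9) : rv i ∈ C2026 := by
  rw [hC_eq]; exact Submodule.subset_span ⟨i, rfl⟩

/-- If `u` is orthogonal to all generators, it is orthogonal to all of `C2026`. -/
lemma dot_zero_of_mem (u : Fin 20 → ZMod 2) (h : ∀ i, dotV u (rv i) = 0) :
    ∀ c ∈ C2026, dotV u c = 0 := by
  intro c hc
  have hle : C2026 ≤ LinearMap.ker (dotL u) := by
    rw [hC_eq]
    refine Submodule.span_le.2 ?_
    rintro x ⟨i, rfl⟩
    exact h i
  exact hle hc

set_option maxRecDepth 4000 in
lemma h_orth : ∀ i j : Fin 9, dotV (rv i) (rv j) = 0 := by decide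

set_option maxRecDepth 4000 in
lemma h_w : ∀ i j : Fin 9, dotV (wv i) (rv j) = if i = j then 1 else 0 := by decide

set_option maxRecDepth 4000 in
lemma h_w2 : ∀ i j : Fin 9, dotV (rv j) (wv i) = if i = j then 1 else 0 := by decide

set_option maxRecDepth 4000 in
lemma h_d_orth : ∀ (k : Fin 11) (j : Fin 9), dotV (rv j) (dv k) = 0 := by decide

set_option maxRecDepth 4000 in
lemma h_y : ∀ k l : Fin 11, dotV (yv k) (dv l) = if k = l then 1 else 0 := by decide

set_option maxRecDepth 4000 in
lemma h_z9 : ∀ i : Fin 9, dotV (yv 9) (rv i) = 0 := by decide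

set_option maxRecDepth 4000 in
lemma h_z10 : ∀ i : Fin 9, dotV (yv 10) (rv i) = 0 := by decide

set_option maxRecDepth 4000 in
lemma hw_dv10 : hw (dv 10) = 6 := by decide

/-- The parity check map. -/
def φmap : (Fin 20 → ZMod 2) →ₗ[ZMod 2] (Fin 9 → ZMod 2) :=
  LinearMap.pi fun i => dotL (rv i)

@[simp] lemma φmap_apply (v : Fin 20 → ZMod 2) (i : Fin 9) : φmap v i = dotV (rv i) v := rfl

set_option maxRecDepth 4000 in
lemma dv_memC : ∀ k : Fin 11, k ≠ 9 → k ≠ 10 → dv k ∈ C2026 := by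
  have h0 : dv 0 = rv 0 + rv 3 + rv 4 + rv 5 + rv 6 + rv 7 := by decide
  have h1 : dv 1 = rv 0 + rv 2 + rv 6 + rv 7 + rv 8 := by decide
  have h2 : dv 2 = rv 0 + rv 2 + rv 3 + rv 4 + rv 5 + rv 8 := by decide
  have h3 : dv 3 = rv 1 + rv 2 + rv 3 + rv 7 + rv 8 := by decide
  have h4 : dv 4 = rv 1 + rv 4 + rv 8 := by decide
  have h5 : dv 5 = rv 1 + rv 2 + rv 3 + rv 4 + rv 7 := by decide
  have h6 : dv 6 = rv 2 := by decide
  have h7 : dv 7 = rv 3 := by decide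
  have h8 : dv 8 = rv 4 := by decide
  intro k hk9 hk10
  fin_cases k
  · show dv 0 ∈ C2026
    rw [h0]; exact add_mem (add_mem (add_mem (add_mem (add_mem (rv_mem 0) (rv_mem 3)) (rv_mem 4)) (rv_mem 5)) (rv_mem 6)) (rv_mem 7)
  · show dv 1 ∈ C2026
    rw [h1]; exact add_mem (add_mem (add_mem (add_mem (rv_mem 0) (rv_mem 2)) (rv_mem 6)) (rv_mem 7)) (rv_mem 8)
  · show dv 2 ∈ C2026
    rw [h2]; exact add_mem (add_mem (add_mem (add_mem (add_mem (rv_mem 0) (rv_mem 2)) (rv_mem 3)) (rv_mem 4)) (rv_mem 5)) (rv_mem 8)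
  · show dv 3 ∈ C2026
    rw [h3]; exact add_mem (add_mem (add_mem (add_mem (rv_mem 1) (rv_mem 2)) (rv_mem 3)) (rv_mem 7)) (rv_mem 8)
  · show dv 4 ∈ C2026
    rw [h4]; exact add_mem (add_mem (rv_mem 1) (rv_mem 4)) (rv_mem 8)
  · show dv 5 ∈ C2026
    rw [h5]; exact add_mem (add_mem (add_mem (add_mem (rv_mem 1) (rv_mem 2)) (rv_mem 3)) (rv_mem 4)) (rv_mem 7)
  · show dv 6 ∈ C2026
    rw [h6]; exact rv_mem 2
  · show dv 7 ∈ C2026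
    rw [h7]; exact rv_mem 3
  · show dv 8 ∈ C2026
    rw [h8]; exact rv_mem 4
  · exact absurd rfl hk9
  · exact absurd rfl hk10

set_option maxRecDepth 100000 in
set_option maxHeartbeats 4000000 in
lemma big : ∀ b0 b1 b2 b3 b4 b5 b6 b7 b8 b9 b10 : ZMod 2, (b9 = 0 ∧ b10 = 0) ∨
    6 ≤ hw (fun j => b0 * dv 0 j + (b1 * dv 1 j + (b2 * dv 2 j + (b3 * dv 3 j + (b4 * dv 4 j + (b5 * dv 5 j + (b6 * dv 6 j + (b7 * dv 7 j + (b8 * dv 8 j + (b9 * dv 9 j + b10 * dv 10 j)))))))))) := by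
  decide

lemma sum_dv (b : Fin 11 → ZMod 2) :
    (∑ k, b k • dv k) = fun j =>
      b 0 * dv 0 j + (b 1 * dv 1 j + (b 2 * dv 2 j + (b 3 * dv 3 j + (b 4 * dv 4 j + (b 5 * dv 5 j + (b 6 * dv 6 j + (b 7 * dv 7 j + (b 8 * dv 8 j + (b 9 * dv 9 j + b 10 * dv 10 j))))))))) := by
  funext j
  simp only [Finset.sum_apply, Pi.smul_apply, smul_eq_mul, Fin.sum_univ_succ,
    Fin.sum_univ_zero, add_zero]
  rfl

theorem stmt14 :
    (∀ u ∈ C2026, ∀ v ∈ C2026, dotV u v = 0) ∧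
    Module.finrank (ZMod 2) C2026 = 9 ∧
    sInf (hw '' {v : Fin 20 → ZMod 2 | (∀ c ∈ C2026, dotV v c = 0) ∧ v ∉ C2026}) = 6 := by
  -- Part 1: self-orthogonality
  have part1 : ∀ u ∈ C2026, ∀ v ∈ C2026, dotV u v = 0 := by
    intro u hu v hv
    refine dot_zero_of_mem u ?_ v hv
    intro i
    rw [dotV_comm]
    exact dot_zero_of_mem (rv i) (fun j => h_orth i j) u hu
  -- Part 2: dimension
  have hli : LinearIndependent (ZMod 2) rv := by
    rw [Fintype.linearIndependent_iff]
    intro g hg i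
    have h := congrArg (dotL (wv i)) hg
    rw [map_sum, map_zero] at h
    simpa only [map_smul, smul_eq_mul, dotL_apply, h_w, mul_ite, mul_one, mul_zero,
      Finset.sum_ite_eq, Finset.mem_univ, if_true] using h
  have part2 : Module.finrank (ZMod 2) C2026 = 9 := by
    rw [hC_eq, finrank_span_eq_card hli]
    simp
  -- The dual as a kernel
  have memDual : ∀ v, (∀ c ∈ C2026, dotV v c = 0) ↔ v ∈ LinearMap.ker φmap := by
    intro v
    constructor
    · intro h
      rw [LinearMap.mem_ker]
      funext i
      show dotV (rv i) v = 0
      rw [dotV_comm]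
      exact h (rv i) (rv_mem i)
    · intro h
      refine dot_zero_of_mem v ?_
      intro i
      rw [dotV_comm]
      exact congrFun (LinearMap.mem_ker.1 h) i
  -- surjectivity of φmap and the kernel dimension
  have hφrange : LinearMap.range φmap = ⊤ := by
    rw [Submodule.eq_top_iff']
    intro x
    refine ⟨∑ i, x i • wv i, ?_⟩
    funext j
    show dotL (rv j) (∑ i, x i • wv i) = x j
    rw [map_sum]
    simp only [map_smul, smul_eq_mul, dotL_apply, h_w2, mul_ite, mul_one, mul_zero,
      Finset.sum_ite_eq', Finset.mem_univ, if_true]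
  have hker : Module.finrank (ZMod 2) (LinearMap.ker φmap) = 11 := by
    have h := LinearMap.finrank_range_add_finrank_ker φmap
    rw [hφrange, finrank_top] at h
    simp only [Module.finrank_pi, Fintype.card_fin] at h
    omega
  -- the span of the dual generators equals the kernel
  have hliD : LinearIndependent (ZMod 2) dv := by
    rw [Fintype.linearIndependent_iff]
    intro g hg k
    have h := congrArg (dotL (yv k)) hg
    rw [map_sum, map_zero] at h
    simpa only [map_smul, smul_eq_mul, dotL_apply, h_y, mul_ite, mul_one, mul_zero,
      Finset.sum_ite_eq, Finset.mem_univ, if_true] using h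
  have hDle : Submodule.span (ZMod 2) (Set.range dv) ≤ LinearMap.ker φmap := by
    refine Submodule.span_le.2 ?_
    rintro x ⟨k, rfl⟩
    rw [SetLike.mem_coe, LinearMap.mem_ker]
    funext j
    exact h_d_orth k j
  have hD : Submodule.span (ZMod 2) (Set.range dv) = LinearMap.ker φmap := by
    refine Submodule.eq_of_le_of_finrank_eq hDle ?_
    rw [hker, finrank_span_eq_card hliD]
    simp
  -- membership in C detected by b 9, b 10
  have hnotC9 : ∀ v ∈ C2026, dotV (yv 9) v = 0 := dot_zero_of_mem (yv 9) h_z9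
  have hnotC10 : ∀ v ∈ C2026, dotV (yv 10) v = 0 := dot_zero_of_mem (yv 10) h_z10
  -- the witness: dv 10 has weight 6 and lies in the dual but not in C
  have hwit : (6 : ℕ) ∈ hw '' {v : Fin 20 → ZMod 2 | (∀ c ∈ C2026, dotV v c = 0) ∧ v ∉ C2026} := by
    refine ⟨dv 10, ⟨?_, ?_⟩, hw_dv10⟩
    · rw [memDual, LinearMap.mem_ker]
      funext j
      exact h_d_orth 10 j
    · intro hmem
      have h1 : dotV (yv 10) (dv 10) = 0 := hnotC10 _ hmem
      have h2 : dotV (yv 10) (dv 10) = 1 := by simpa using h_y 10 10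
      rw [h1] at h2
      exact one_ne_zero h2.symm
  have hlb : ∀ m ∈ hw '' {v : Fin 20 → ZMod 2 | (∀ c ∈ C2026, dotV v c = 0) ∧ v ∉ C2026}, 6 ≤ m := by
    rintro m ⟨v, ⟨hdual, hnC⟩, rfl⟩
    have hv : v ∈ Submodule.span (ZMod 2) (Set.range dv) := by
      rw [hD]; exact (memDual v).1 hdual
    obtain ⟨b, hb⟩ := (Submodule.mem_span_range_iff_exists_fun _).1 hv
    rcases big (b 0) (b 1) (b 2) (b 3) (b 4) (b 5) (b 6) (b 7) (b 8) (b 9) (b 10) with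
      ⟨h9, h10⟩ | hge
    · -- then v ∈ C2026, contradiction
      exfalso
      apply hnC
      rw [← hb]
      refine Submodule.sum_mem _ ?_
      intro k _
      by_cases hk9 : k = 9
      · subst hk9; rw [h9, zero_smul]; exact zero_mem _
      by_cases hk10 : k = 10
      · subst hk10; rw [h10, zero_smul]; exact zero_mem _
      exact Submodule.smul_mem _ _ (dv_memC k hk9 hk10)
    · calc (6 : ℕ) ≤ _ := hge
        _ = hw v := by rw [← hb, sum_dv]
  exact ⟨part1, part2, le_antisymm (Nat.sInf_le hwit) (le_csInf ⟨6, hwit⟩ hlb)⟩
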